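/- There exists a Nash equilibrium Ω* = (μ*_infl, Λ*, X*) of the game with perfect information that maximizes the social welfare over all admissible allocations: Φ(Ω*) = max_{Ω ∈ S(M_infl,M)} Φ(Ω). In particular, every maximizer of Φ over S(M_infl, M) is a Nash equilibrium, and such a maximizer exists. -/

import Mathlib

open scoped Classical

noncomputable section

/-- Points of the `d`-dimensional Euclidean space. -/
abbrev E (d : ℕ) : Type := EuclideanSpace ℝ (Fin d)

/-- An allocation `Ω = (μ_infl, Λ, X)`: `muI z` is the rate with which the
influencer follows producer `z`; `mu z y` is the rate with which consumer `y`
follows producer `z` directly; `muY y` is the rate with which consumer `y`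
follows the influencer; `lam y` is the rate with which consumer `y` follows
outside sources; `X z` is the content topic created by producer `z`. -/
structure Alloc (d : ℕ) where
  muI : E d → ℝ
  mu  : E d → E d → ℝ
  muY : E d → ℝ
  lam : E d → ℝ
  X   : E d → E d

variable (d : ℕ)

/-- Admissibility of an allocation: nonnegative rates, the rate budget `M_infl`
of the influencer, the rate budget `M` of each consumer, and contents in `T`. -/
def Admissible (T : Set (E d)) (C : Finset (E d)) (Minfl M : ℝ) (Ω : Alloc d) : Prop :=
  (∀ z ∈ C, 0 ≤ Ω.muI z) ∧ ((∑ z ∈ C, Ω.muI z) ≤ Minfl) ∧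
  (∀ y ∈ C, (∀ z ∈ C.erase y, 0 ≤ Ω.mu z y) ∧ 0 ≤ Ω.muY y ∧ 0 ≤ Ω.lam y ∧
    ((∑ z ∈ C.erase y, Ω.mu z y) + Ω.muY y + Ω.lam y ≤ M)) ∧
  (∀ z ∈ C, Ω.X z ∈ T)

/-- `B(z|y) = q(x(z)|z) · p(x(z)|y)` where `p(x|y) = f(d(x,y))`, `q(x|y) = g(d(x,y))`. -/
def Bfun (f g : ℝ → ℝ) (Ω : Alloc d) (z y : E d) : ℝ :=
  g (dist (Ω.X z) z) * f (dist (Ω.X z) y)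

/-- The consumption utility `U_c(y|Ω)` of consumer `y`. -/
def Uc (f g I : ℝ → ℝ) (C : Finset (E d)) (rp r0 B0 : ℝ) (Ω : Alloc d) (y : E d) : ℝ :=
  rp * ∑ z ∈ C.erase y, Bfun d f g Ω z y * I (Ω.muI z) * I (Ω.muY y)
  + rp * ∑ z ∈ C.erase y, Bfun d f g Ω z y * I (Ω.mu z y)
  + r0 * B0 * I (Ω.lam y)

/-- The influencer utility `U_infl(μ_infl|Λ,X)`. -/
def Uinfl (f g I : ℝ → ℝ) (C : Finset (E d)) (rp : ℝ) (Ω : Alloc d) : ℝ :=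
  rp * ∑ z ∈ C, ∑ y ∈ C.erase z, Bfun d f g Ω z y * I (Ω.muI z) * I (Ω.muY y)

/-- The producer utility (social support) `U_p(z|Ω)` of producer `z`. -/
def Up (f g I : ℝ → ℝ) (C : Finset (E d)) (rp : ℝ) (Ω : Alloc d) (z : E d) : ℝ :=
  rp * ∑ y ∈ C.erase z, Bfun d f g Ω z y * I (Ω.muI z) * I (Ω.muY y)
  + rp * ∑ y ∈ C.erase z, Bfun d f g Ω z y * I (Ω.mu z y)

/-- The social welfare `Φ(Ω) = Σ_{y∈C} U_c(y|Ω)`. -/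
def Phi (f g I : ℝ → ℝ) (C : Finset (E d)) (rp r0 B0 : ℝ) (Ω : Alloc d) : ℝ :=
  ∑ y ∈ C, Uc d f g I C rp r0 B0 Ω y

/-- The allocation obtained from `Ω` when consumer `y` unilaterally deviates to
the rates `(mu', muY', lam')`. -/
def consDeviate (Ω : Alloc d) (y : E d) (mu' : E d → ℝ) (muY' lam' : ℝ) : Alloc d :=
  { Ω with
    mu := fun z w => if w = y then mu' z else Ω.mu z w,
    muY := Function.update Ω.muY y muY',
    lam := Function.update Ω.lam y lam' }

/-- The influencer's rates are a best response: no feasible deviation of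
`μ_infl` increases the influencer utility. -/
def InflBR (f g I : ℝ → ℝ) (C : Finset (E d)) (rp Minfl : ℝ) (Ω : Alloc d) : Prop :=
  ∀ μI' : E d → ℝ, (∀ z ∈ C, 0 ≤ μI' z) → ((∑ z ∈ C, μI' z) ≤ Minfl) →
    Uinfl d f g I C rp { Ω with muI := μI' } ≤ Uinfl d f g I C rp Ω

/-- Consumer `y`'s rates are a best response in the game with perfect
information: no feasible deviation increases the consumption utility. -/
def ConsBR (f g I : ℝ → ℝ) (C : Finset (E d)) (rp r0 B0 M : ℝ) (Ω : Alloc d) (y : E d) : Prop :=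
  ∀ (mu' : E d → ℝ) (muY' lam' : ℝ),
    (∀ z ∈ C.erase y, 0 ≤ mu' z) → 0 ≤ muY' → 0 ≤ lam' →
    ((∑ z ∈ C.erase y, mu' z) + muY' + lam' ≤ M) →
    Uc d f g I C rp r0 B0 (consDeviate d Ω y mu' muY' lam') y ≤ Uc d f g I C rp r0 B0 Ω y

/-- Producer `z`'s content is a best response: no deviation of the content
topic within `T` increases the producer's social support. -/
def ProdBR (f g I : ℝ → ℝ) (T : Set (E d)) (C : Finset (E d)) (rp : ℝ) (Ω : Alloc d) (z : E d) : Prop :=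
  ∀ x ∈ T, Up d f g I C rp { Ω with X := Function.update Ω.X z x } z ≤ Up d f g I C rp Ω z

/-- Nash equilibrium of the game with perfect information. -/
def NashPerfect (f g I : ℝ → ℝ) (T : Set (E d)) (C : Finset (E d))
    (rp r0 B0 Minfl M : ℝ) (Ω : Alloc d) : Prop :=
  Admissible d T C Minfl M Ω ∧
  InflBR d f g I C rp Minfl Ω ∧
  (∀ y ∈ C, ConsBR d f g I C rp r0 B0 M Ω y) ∧
  (∀ z ∈ C, ProdBR d f g I T C rp Ω z)

/-- Admissibility in the proxy game: in addition, consumers follow no producer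
directly. -/
def ProxyAdmissible (T : Set (E d)) (C : Finset (E d)) (Minfl M : ℝ) (Ω : Alloc d) : Prop :=
  Admissible d T C Minfl M Ω ∧ ∀ y ∈ C, ∀ z ∈ C.erase y, Ω.mu z y = 0

/-- Consumer `y`'s rates are a best response in the proxy game, where the
consumer may only follow the influencer and outside sources. -/
def ProxyConsBR (f g I : ℝ → ℝ) (C : Finset (E d)) (rp r0 B0 M : ℝ) (Ω : Alloc d) (y : E d) : Prop :=
  ∀ (muY' lam' : ℝ), 0 ≤ muY' → 0 ≤ lam' → muY' + lam' ≤ M →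
    Uc d f g I C rp r0 B0 (consDeviate d Ω y (fun _ => 0) muY' lam') y ≤
      Uc d f g I C rp r0 B0 Ω y

/-- Nash equilibrium of the proxy game. -/
def NashProxy (f g I : ℝ → ℝ) (T : Set (E d)) (C : Finset (E d))
    (rp r0 B0 Minfl M : ℝ) (Ω : Alloc d) : Prop :=
  ProxyAdmissible d T C Minfl M Ω ∧
  InflBR d f g I C rp Minfl Ω ∧
  (∀ y ∈ C, ProxyConsBR d f g I C rp r0 B0 M Ω y) ∧
  (∀ z ∈ C, ProdBR d f g I T C rp Ω z)

/-- Tie-break convention (Assumption 4): if no consumer follows the influencer,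
the influencer splits its rate budget uniformly. -/
def TieBreak (C : Finset (E d)) (Minfl : ℝ) (Ω : Alloc d) : Prop :=
  (∑ y ∈ C, Ω.muY y) = 0 → ∀ z ∈ C, Ω.muI z = Minfl / (C.card : ℝ)


/-! ### Auxiliary lemmas for Statement 7 -/

section Stmt7Aux

private lemma mySumSwap (C : Finset (E d)) (h : E d → E d → ℝ) :
    ∑ z ∈ C, ∑ y ∈ C.erase z, h z y = ∑ y ∈ C, ∑ z ∈ C.erase y, h z y := by
  refine Finset.sum_comm' (fun z y => ?_)
  simp only [Finset.mem_erase]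
  constructor
  · rintro ⟨hz, hyz, hy⟩; exact ⟨⟨Ne.symm hyz, hz⟩, hy⟩
  · rintro ⟨⟨hzy, hz⟩, hy⟩; exact ⟨hz, Ne.symm hzy, hy⟩

private lemma mySumSplit (C : Finset (E d)) {z : E d} (hz : z ∈ C) (h : E d → E d → ℝ) :
    ∑ y ∈ C, ∑ w ∈ C.erase y, h w y
      = ∑ y ∈ C.erase z, h z y + ∑ y ∈ C, ∑ w ∈ (C.erase y).erase z, h w y := by
  have key : ∀ y ∈ C, ∑ w ∈ C.erase y, h w y
      = (if y = z then 0 else h z y) + ∑ w ∈ (C.erase y).erase z, h w y := by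
    intro y _
    by_cases hyz : y = z
    · subst hyz
      simp [Finset.erase_idem]
    · have hzm : z ∈ C.erase y := Finset.mem_erase.2 ⟨fun h' => hyz h'.symm, hz⟩
      rw [if_neg hyz, ← Finset.sum_erase_add _ _ hzm, add_comm]
  calc ∑ y ∈ C, ∑ w ∈ C.erase y, h w y
      = ∑ y ∈ C, ((if y = z then 0 else h z y) + ∑ w ∈ (C.erase y).erase z, h w y) :=
        Finset.sum_congr rfl key
    _ = (∑ y ∈ C, if y = z then 0 else h z y)
          + ∑ y ∈ C, ∑ w ∈ (C.erase y).erase z, h w y := Finset.sum_add_distrib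
    _ = ∑ y ∈ C.erase z, h z y + ∑ y ∈ C, ∑ w ∈ (C.erase y).erase z, h w y := by
        congr 1
        rw [← Finset.sum_erase (s := C) (f := fun y => if y = z then 0 else h z y) (a := z)
          (by simp)]
        exact Finset.sum_congr rfl fun y hy => if_neg (Finset.mem_erase.1 hy).1

private lemma myPhiCongr (f g I : ℝ → ℝ) (C : Finset (E d)) (rp r0 B0 : ℝ)
    (Ω₁ Ω₂ : Alloc d)
    (h1 : ∀ z ∈ C, Ω₁.muI z = Ω₂.muI z)
    (h2 : ∀ y ∈ C, ∀ z ∈ C.erase y, Ω₁.mu z y = Ω₂.mu z y)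
    (h3 : ∀ y ∈ C, Ω₁.muY y = Ω₂.muY y)
    (h4 : ∀ y ∈ C, Ω₁.lam y = Ω₂.lam y)
    (h5 : ∀ z ∈ C, Ω₁.X z = Ω₂.X z) :
    Phi d f g I C rp r0 B0 Ω₁ = Phi d f g I C rp r0 B0 Ω₂ := by
  unfold Phi Uc Bfun
  refine Finset.sum_congr rfl fun y hy => ?_
  rw [h3 y hy, h4 y hy]
  have e1 : ∑ z ∈ C.erase y,
      g (dist (Ω₁.X z) z) * f (dist (Ω₁.X z) y) * I (Ω₁.muI z) * I (Ω₂.muY y)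
      = ∑ z ∈ C.erase y,
      g (dist (Ω₂.X z) z) * f (dist (Ω₂.X z) y) * I (Ω₂.muI z) * I (Ω₂.muY y) :=
    Finset.sum_congr rfl fun z hz => by
      rw [h5 z (Finset.mem_of_mem_erase hz), h1 z (Finset.mem_of_mem_erase hz)]
  have e2 : ∑ z ∈ C.erase y,
      g (dist (Ω₁.X z) z) * f (dist (Ω₁.X z) y) * I (Ω₁.mu z y)
      = ∑ z ∈ C.erase y,
      g (dist (Ω₂.X z) z) * f (dist (Ω₂.X z) y) * I (Ω₂.mu z y) :=
    Finset.sum_congr rfl fun z hz => by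
      rw [h5 z (Finset.mem_of_mem_erase hz), h2 y hy z hz]
  rw [e1, e2]

private lemma myUcDeviate (f g I : ℝ → ℝ) (C : Finset (E d)) (rp r0 B0 : ℝ)
    (Ω : Alloc d) (y : E d) (mu' : E d → ℝ) (muY' lam' : ℝ) {w : E d} (hw : w ≠ y) :
    Uc d f g I C rp r0 B0 (consDeviate d Ω y mu' muY' lam') w
      = Uc d f g I C rp r0 B0 Ω w := by
  unfold Uc Bfun consDeviate
  simp [Function.update_of_ne hw, if_neg hw]

private lemma myPhiDecomp (f g I : ℝ → ℝ) (C : Finset (E d)) (rp r0 B0 : ℝ) (Ω : Alloc d) :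
    Phi d f g I C rp r0 B0 Ω
      = Uinfl d f g I C rp Ω
        + ∑ y ∈ C, (rp * ∑ z ∈ C.erase y, Bfun d f g Ω z y * I (Ω.mu z y)
            + r0 * B0 * I (Ω.lam y)) := by
  unfold Phi Uc Uinfl
  rw [mySumSwap d C (fun z y => Bfun d f g Ω z y * I (Ω.muI z) * I (Ω.muY y)),
    Finset.mul_sum, ← Finset.sum_add_distrib]
  exact Finset.sum_congr rfl fun y _ => by ring

private lemma myMaxNash (f g I : ℝ → ℝ) (T : Set (E d)) (C : Finset (E d))
    (rp r0 B0 Minfl M : ℝ) (Ω : Alloc d)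
    (hAdm : Admissible d T C Minfl M Ω)
    (hmax : ∀ Ω' : Alloc d, Admissible d T C Minfl M Ω' →
      Phi d f g I C rp r0 B0 Ω' ≤ Phi d f g I C rp r0 B0 Ω) :
    NashPerfect d f g I T C rp r0 B0 Minfl M Ω := by
  obtain ⟨h1, h2, h3, h4⟩ := hAdm
  refine ⟨⟨h1, h2, h3, h4⟩, ?_, ?_, ?_⟩
  · -- influencer best response
    intro μI' hpos hsum
    set Ω' : Alloc d := { Ω with muI := μI' } with hΩ'
    have hadm' : Admissible d T C Minfl M Ω' := ⟨hpos, hsum, h3, h4⟩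
    have hφ := hmax Ω' hadm'
    have e1 := myPhiDecomp d f g I C rp r0 B0 Ω
    have e2 := myPhiDecomp d f g I C rp r0 B0 Ω'
    have e3 : (∑ y ∈ C, (rp * ∑ z ∈ C.erase y, Bfun d f g Ω' z y * I (Ω'.mu z y)
        + r0 * B0 * I (Ω'.lam y)))
        = ∑ y ∈ C, (rp * ∑ z ∈ C.erase y, Bfun d f g Ω z y * I (Ω.mu z y)
        + r0 * B0 * I (Ω.lam y)) := rfl
    rw [e1, e2, e3] at hφ
    linarith
  · -- consumer best response
    intro y hy mu' muY' lam' hpos hY hL hsum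
    set Ω' : Alloc d := consDeviate d Ω y mu' muY' lam' with hΩ'
    have hadm' : Admissible d T C Minfl M Ω' := by
      refine ⟨h1, h2, ?_, h4⟩
      intro w hw
      by_cases hwy : w = y
      · subst hwy
        refine ⟨?_, ?_, ?_, ?_⟩
        · intro z hz
          simpa [hΩ', consDeviate] using hpos z hz
        · simpa [hΩ', consDeviate] using hY
        · simpa [hΩ', consDeviate] using hL
        · simpa [hΩ', consDeviate] using hsum
      · have h3' := h3 w hw
        refine ⟨?_, ?_, ?_, ?_⟩
        · intro z hz
          simpa [hΩ', consDeviate, if_neg hwy] using h3'.1 z hz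
        · simpa [hΩ', consDeviate, Function.update_of_ne hwy] using h3'.2.1
        · simpa [hΩ', consDeviate, Function.update_of_ne hwy] using h3'.2.2.1
        · simpa [hΩ', consDeviate, if_neg hwy, Function.update_of_ne hwy] using h3'.2.2.2
    have hφ := hmax Ω' hadm'
    have hsplit : ∀ Ωa : Alloc d, Phi d f g I C rp r0 B0 Ωa
        = Uc d f g I C rp r0 B0 Ωa y + ∑ w ∈ C.erase y, Uc d f g I C rp r0 B0 Ωa w :=
      fun Ωa => (Finset.add_sum_erase C _ hy).symm
    rw [hsplit Ω', hsplit Ω] at hφ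
    have hrest : ∑ w ∈ C.erase y, Uc d f g I C rp r0 B0 Ω' w
        = ∑ w ∈ C.erase y, Uc d f g I C rp r0 B0 Ω w :=
      Finset.sum_congr rfl fun w hw =>
        myUcDeviate d f g I C rp r0 B0 Ω y mu' muY' lam' (Finset.mem_erase.1 hw).1
    rw [hrest] at hφ
    linarith
  · -- producer best response
    intro z hz x hx
    set Ω' : Alloc d := { Ω with X := Function.update Ω.X z x } with hΩ'
    have hadm' : Admissible d T C Minfl M Ω' := by
      refine ⟨h1, h2, h3, ?_⟩
      intro w hw
      by_cases hwz : w = z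
      · subst hwz
        simpa [hΩ'] using hx
      · simpa [hΩ', Function.update_of_ne hwz] using h4 w hw
    have hdec : ∀ Ωa : Alloc d,
        Phi d f g I C rp r0 B0 Ωa = Up d f g I C rp Ωa z
          + (rp * ∑ y ∈ C, ∑ w ∈ (C.erase y).erase z,
                Bfun d f g Ωa w y * I (Ωa.muI w) * I (Ωa.muY y)
            + rp * ∑ y ∈ C, ∑ w ∈ (C.erase y).erase z,
                Bfun d f g Ωa w y * I (Ωa.mu w y)
            + ∑ y ∈ C, r0 * B0 * I (Ωa.lam y)) := by
      intro Ωa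
      have h1s : ∑ y ∈ C, ∑ w ∈ C.erase y,
            Bfun d f g Ωa w y * I (Ωa.muI w) * I (Ωa.muY y)
          = ∑ y ∈ C.erase z, Bfun d f g Ωa z y * I (Ωa.muI z) * I (Ωa.muY y)
            + ∑ y ∈ C, ∑ w ∈ (C.erase y).erase z,
                Bfun d f g Ωa w y * I (Ωa.muI w) * I (Ωa.muY y) :=
        mySumSplit d C hz _
      have h2s : ∑ y ∈ C, ∑ w ∈ C.erase y, Bfun d f g Ωa w y * I (Ωa.mu w y)
          = ∑ y ∈ C.erase z, Bfun d f g Ωa z y * I (Ωa.mu z y)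
            + ∑ y ∈ C, ∑ w ∈ (C.erase y).erase z, Bfun d f g Ωa w y * I (Ωa.mu w y) :=
        mySumSplit d C hz _
      unfold Phi Uc Up
      rw [Finset.sum_add_distrib, Finset.sum_add_distrib, ← Finset.mul_sum, ← Finset.mul_sum,
        h1s, h2s]
      ring
    have hφ := hmax Ω' hadm'
    have hB : ∀ y, ∀ w ∈ (C.erase y).erase z, Bfun d f g Ω' w y = Bfun d f g Ω w y := by
      intro y w hw
      have hwz : w ≠ z := (Finset.mem_erase.1 hw).1
      simp [hΩ', Bfun, Function.update_of_ne hwz]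
    have hrest1 : ∑ y ∈ C, ∑ w ∈ (C.erase y).erase z,
          Bfun d f g Ω' w y * I (Ω'.muI w) * I (Ω'.muY y)
        = ∑ y ∈ C, ∑ w ∈ (C.erase y).erase z,
          Bfun d f g Ω w y * I (Ω.muI w) * I (Ω.muY y) :=
      Finset.sum_congr rfl fun y _ => Finset.sum_congr rfl fun w hw => by
        rw [hB y w hw]
    have hrest2 : ∑ y ∈ C, ∑ w ∈ (C.erase y).erase z,
          Bfun d f g Ω' w y * I (Ω'.mu w y)
        = ∑ y ∈ C, ∑ w ∈ (C.erase y).erase z, Bfun d f g Ω w y * I (Ω.mu w y) :=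
      Finset.sum_congr rfl fun y _ => Finset.sum_congr rfl fun w hw => by
        rw [hB y w hw]
    have hrest3 : ∑ y ∈ C, r0 * B0 * I (Ω'.lam y) = ∑ y ∈ C, r0 * B0 * I (Ω.lam y) := rfl
    rw [hdec Ω', hdec Ω, hrest1, hrest2, hrest3] at hφ
    linarith

/-- The parameter space for allocations. -/
private abbrev PS (d : ℕ) : Type :=
  (E d → ℝ) × (E d → E d → ℝ) × (E d → ℝ) × (E d → ℝ) × (E d → E d)

private def mkAlloc (p : PS d) : Alloc d :=
  ⟨p.1, p.2.1, p.2.2.1, p.2.2.2.1, p.2.2.2.2⟩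

private lemma myExistsMax (f g I : ℝ → ℝ)
    (hf_cont : ContinuousOn f (Set.Ici 0))
    (hg_cont : ContinuousOn g (Set.Ici 0))
    (hI_cont : ContinuousOn I (Set.Ici 0))
    (T : Set (E d)) (hT_ne : T.Nonempty) (hT_comp : IsCompact T)
    (C : Finset (E d)) (rp r0 B0 : ℝ) (Minfl M : ℝ)
    (hMinfl : 0 < Minfl) (hM : 0 < M) :
    ∃ Ω : Alloc d, Admissible d T C Minfl M Ω ∧
      ∀ Ω' : Alloc d, Admissible d T C Minfl M Ω' →
        Phi d f g I C rp r0 B0 Ω' ≤ Phi d f g I C rp r0 B0 Ω := by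
  classical
  obtain ⟨t0, ht0⟩ := hT_ne
  -- the compact box
  set SI : Set (E d → ℝ) :=
    Set.pi Set.univ (fun z => if z ∈ C then Set.Icc (0:ℝ) Minfl else {0}) with hSIdef
  set Smu : Set (E d → E d → ℝ) :=
    Set.pi Set.univ (fun z => Set.pi Set.univ
      (fun y => if z ∈ C ∧ y ∈ C then Set.Icc (0:ℝ) M else {0})) with hSmudef
  set SY : Set (E d → ℝ) :=
    Set.pi Set.univ (fun y => if y ∈ C then Set.Icc (0:ℝ) M else {0}) with hSYdef
  set SX : Set (E d → E d) :=
    Set.pi Set.univ (fun z => if z ∈ C then T else {t0}) with hSXdef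
  have hSI : IsCompact SI := isCompact_univ_pi fun z => by
    by_cases h : z ∈ C
    · simpa [h] using isCompact_Icc
    · simpa [h] using isCompact_singleton
  have hSmu : IsCompact Smu := isCompact_univ_pi fun z => isCompact_univ_pi fun y => by
    by_cases h : z ∈ C ∧ y ∈ C
    · simpa [h] using isCompact_Icc
    · simpa [h] using isCompact_singleton
  have hSY : IsCompact SY := isCompact_univ_pi fun y => by
    by_cases h : y ∈ C
    · simpa [h] using isCompact_Icc
    · simpa [h] using isCompact_singleton
  have hSX : IsCompact SX := isCompact_univ_pi fun z => by
    by_cases h : z ∈ C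
    · simpa [h] using hT_comp
    · simpa [h] using isCompact_singleton
  set Box : Set (PS d) := SI ×ˢ Smu ×ˢ SY ×ˢ SY ×ˢ SX with hBoxdef
  have hBox : IsCompact Box := hSI.prod (hSmu.prod (hSY.prod (hSY.prod hSX)))
  -- the closed constraint set
  set Con : Set (PS d) := {p | (∑ z ∈ C, p.1 z) ≤ Minfl ∧
    ∀ y ∈ C, (∑ z ∈ C.erase y, p.2.1 z y) + p.2.2.1 y + p.2.2.2.1 y ≤ M} with hCondef
  have cMuI : ∀ z : E d, Continuous (fun p : PS d => p.1 z) :=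
    fun z => (continuous_apply z).comp continuous_fst
  have cMu : ∀ z y : E d, Continuous (fun p : PS d => p.2.1 z y) :=
    fun z y => (continuous_apply y).comp
      ((continuous_apply z).comp (continuous_fst.comp continuous_snd))
  have cMuY : ∀ y : E d, Continuous (fun p : PS d => p.2.2.1 y) :=
    fun y => (continuous_apply y).comp
      (continuous_fst.comp (continuous_snd.comp continuous_snd))
  have cLam : ∀ y : E d, Continuous (fun p : PS d => p.2.2.2.1 y) :=
    fun y => (continuous_apply y).comp
      (continuous_fst.comp (continuous_snd.comp (continuous_snd.comp continuous_snd)))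
  have cXp : ∀ z : E d, Continuous (fun p : PS d => p.2.2.2.2 z) :=
    fun z => (continuous_apply z).comp
      (continuous_snd.comp (continuous_snd.comp (continuous_snd.comp continuous_snd)))
  have hCon : IsClosed Con := by
    have hc1 : IsClosed {p : PS d | (∑ z ∈ C, p.1 z) ≤ Minfl} :=
      isClosed_le (continuous_finset_sum _ fun z _ => cMuI z) continuous_const
    have hc2 : IsClosed {p : PS d | ∀ y ∈ C,
        (∑ z ∈ C.erase y, p.2.1 z y) + p.2.2.1 y + p.2.2.2.1 y ≤ M} := by
      have : {p : PS d | ∀ y ∈ C,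
          (∑ z ∈ C.erase y, p.2.1 z y) + p.2.2.1 y + p.2.2.2.1 y ≤ M}
          = ⋂ y ∈ C, {p : PS d |
            (∑ z ∈ C.erase y, p.2.1 z y) + p.2.2.1 y + p.2.2.2.1 y ≤ M} := by
        ext p; simp
      rw [this]
      refine isClosed_biInter fun y _ => isClosed_le ?_ continuous_const
      exact (((continuous_finset_sum _ fun z _ => cMu z y).add (cMuY y)).add (cLam y))
    exact hc1.inter hc2
  set A : Set (PS d) := Box ∩ Con with hAdef
  have hAcomp : IsCompact A := hBox.inter_right hCon
  -- nonemptiness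
  have hp0 : ((fun _ => 0, fun _ _ => 0, fun _ => 0, fun _ => 0, fun _ => t0) : PS d) ∈ A := by
    constructor
    · refine ⟨?_, ?_, ?_, ?_, ?_⟩
      · intro z _
        by_cases h : z ∈ C <;> simp [h, hMinfl.le]
      · intro z _
        intro y _
        by_cases h : z ∈ C ∧ y ∈ C <;> simp [h, hM.le]
      · intro y _
        by_cases h : y ∈ C <;> simp [h, hM.le]
      · intro y _
        by_cases h : y ∈ C <;> simp [h, hM.le]
      · intro z _
        by_cases h : z ∈ C <;> simp [h, ht0]
    · constructor
      · simp [hMinfl.le]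
      · intro y _; simp [hM.le]
  -- membership facts on `A`
  have memI : ∀ p ∈ A, ∀ z, p.1 z ∈ Set.Ici (0:ℝ) := by
    intro p hp z
    have := hp.1.1 z (Set.mem_univ z)
    by_cases h : z ∈ C
    · simp only [h, if_true] at this; exact this.1
    · simp only [h, if_false] at this
      simp only [Set.mem_singleton_iff] at this; simp [this]
  have memMu : ∀ p ∈ A, ∀ z y, p.2.1 z y ∈ Set.Ici (0:ℝ) := by
    intro p hp z y
    have := hp.1.2.1 z (Set.mem_univ z) y (Set.mem_univ y)
    by_cases h : z ∈ C ∧ y ∈ C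
    · simp only [if_pos h] at this; exact this.1
    · simp only [if_neg h] at this
      simp only [Set.mem_singleton_iff] at this; simp [this]
  have memY : ∀ p ∈ A, ∀ y, p.2.2.1 y ∈ Set.Ici (0:ℝ) := by
    intro p hp y
    have := hp.1.2.2.1 y (Set.mem_univ y)
    by_cases h : y ∈ C
    · simp only [h, if_true] at this; exact this.1
    · simp only [h, if_false] at this
      simp only [Set.mem_singleton_iff] at this; simp [this]
  have memL : ∀ p ∈ A, ∀ y, p.2.2.2.1 y ∈ Set.Ici (0:ℝ) := by
    intro p hp y
    have := hp.1.2.2.2.1 y (Set.mem_univ y)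
    by_cases h : y ∈ C
    · simp only [h, if_true] at this; exact this.1
    · simp only [h, if_false] at this
      simp only [Set.mem_singleton_iff] at this; simp [this]
  have memX : ∀ p ∈ A, ∀ z ∈ C, p.2.2.2.2 z ∈ T := by
    intro p hp z hz
    have := hp.1.2.2.2.2 z (Set.mem_univ z)
    simpa only [hz, if_true] using this
  -- continuity of the welfare on `A`
  have hFcont : ContinuousOn (fun p : PS d => Phi d f g I C rp r0 B0 (mkAlloc d p)) A := by
    have cg : ∀ z : E d, ContinuousOn (fun p : PS d => g (dist (p.2.2.2.2 z) z)) A :=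
      fun z => hg_cont.comp ((cXp z).dist continuous_const).continuousOn
        fun p _ => dist_nonneg
    have cf : ∀ z y : E d, ContinuousOn (fun p : PS d => f (dist (p.2.2.2.2 z) y)) A :=
      fun z y => hf_cont.comp ((cXp z).dist continuous_const).continuousOn
        fun p _ => dist_nonneg
    have cI1 : ∀ z : E d, ContinuousOn (fun p : PS d => I (p.1 z)) A :=
      fun z => hI_cont.comp (cMuI z).continuousOn fun p hp => memI p hp z
    have cI2 : ∀ z y : E d, ContinuousOn (fun p : PS d => I (p.2.1 z y)) A :=
      fun z y => hI_cont.comp (cMu z y).continuousOn fun p hp => memMu p hp z y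
    have cI3 : ∀ y : E d, ContinuousOn (fun p : PS d => I (p.2.2.1 y)) A :=
      fun y => hI_cont.comp (cMuY y).continuousOn fun p hp => memY p hp y
    have cI4 : ∀ y : E d, ContinuousOn (fun p : PS d => I (p.2.2.2.1 y)) A :=
      fun y => hI_cont.comp (cLam y).continuousOn fun p hp => memL p hp y
    simp only [Phi, Uc, Bfun, mkAlloc]
    refine continuousOn_finset_sum _ fun y _ => ((ContinuousOn.add ?_ ?_).add ?_)
    · exact continuousOn_const.mul (continuousOn_finset_sum _ fun z _ =>
        (((cg z).mul (cf z y)).mul (cI1 z)).mul (cI3 y))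
    · exact continuousOn_const.mul (continuousOn_finset_sum _ fun z _ =>
        ((cg z).mul (cf z y)).mul (cI2 z y))
    · exact continuousOn_const.mul (cI4 y)
  obtain ⟨pstar, hpstar, hmax⟩ :=
    hAcomp.exists_isMaxOn ⟨_, hp0⟩ hFcont
  refine ⟨mkAlloc d pstar, ?_, ?_⟩
  · -- admissibility of the maximizer
    refine ⟨fun z _ => memI pstar hpstar z, hpstar.2.1, ?_, fun z hz => memX pstar hpstar z hz⟩
    intro y hy
    exact ⟨fun z _ => memMu pstar hpstar z y, memY pstar hpstar y,
      memL pstar hpstar y, hpstar.2.2 y hy⟩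
  · -- maximality
    intro Ω' hΩ'
    obtain ⟨a1, a2, a3, a4⟩ := hΩ'
    set p' : PS d := (fun z => if z ∈ C then Ω'.muI z else 0,
      fun z y => if z ∈ C.erase y ∧ y ∈ C then Ω'.mu z y else 0,
      fun y => if y ∈ C then Ω'.muY y else 0,
      fun y => if y ∈ C then Ω'.lam y else 0,
      fun z => if z ∈ C then Ω'.X z else t0) with hp'def
    have hp' : p' ∈ A := by
      constructor
      · refine ⟨?_, ?_, ?_, ?_, ?_⟩
        · intro z _
          by_cases h : z ∈ C
          · have hle : Ω'.muI z ≤ Minfl :=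
              le_trans (Finset.single_le_sum (fun i hi => a1 i hi) h) a2
            simp [hp'def, h, a1 z h, hle]
          · simp [hp'def, h]
        · intro z _ y _
          show (if z ∈ C.erase y ∧ y ∈ C then Ω'.mu z y else 0)
            ∈ (if z ∈ C ∧ y ∈ C then Set.Icc (0:ℝ) M else {0})
          by_cases h : z ∈ C.erase y ∧ y ∈ C
          · have h3y := a3 y h.2
            have hle : Ω'.mu z y ≤ M := by
              have hone : Ω'.mu z y ≤ ∑ w ∈ C.erase y, Ω'.mu w y :=
                Finset.single_le_sum (fun i hi => h3y.1 i hi) h.1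
              linarith [h3y.2.1, h3y.2.2.1, h3y.2.2.2]
            have hzC : z ∈ C := Finset.mem_of_mem_erase h.1
            rw [if_pos h, if_pos ⟨hzC, h.2⟩]
            exact ⟨h3y.1 z h.1, hle⟩
          · rw [if_neg h]
            by_cases h2 : z ∈ C ∧ y ∈ C
            · rw [if_pos h2]
              exact ⟨le_refl 0, hM.le⟩
            · rw [if_neg h2]
              simp
        · intro y _
          by_cases h : y ∈ C
          · have h3y := a3 y h
            have hle : Ω'.muY y ≤ M := by
              have := Finset.sum_nonneg (fun i hi => h3y.1 i hi)
              linarith [h3y.2.2.1, h3y.2.2.2]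
            simp [hp'def, h, h3y.2.1, hle]
          · simp [hp'def, h]
        · intro y _
          by_cases h : y ∈ C
          · have h3y := a3 y h
            have hle : Ω'.lam y ≤ M := by
              have := Finset.sum_nonneg (fun i hi => h3y.1 i hi)
              linarith [h3y.2.1, h3y.2.2.2]
            simp [hp'def, h, h3y.2.2.1, hle]
          · simp [hp'def, h]
        · intro z _
          by_cases h : z ∈ C
          · simp [hp'def, h, a4 z h]
          · simp [hp'def, h]
      · constructor
        · have : ∑ z ∈ C, (if z ∈ C then Ω'.muI z else 0) = ∑ z ∈ C, Ω'.muI z :=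
            Finset.sum_congr rfl fun z hz => if_pos hz
          show ∑ z ∈ C, (if z ∈ C then Ω'.muI z else 0) ≤ Minfl
          rw [this]
          exact a2
        · intro y hy
          have e : ∀ z ∈ C.erase y, p'.2.1 z y = Ω'.mu z y := fun z hz => by
            show (if z ∈ C.erase y ∧ y ∈ C then Ω'.mu z y else 0) = Ω'.mu z y
            rw [if_pos ⟨hz, hy⟩]
          have e2 : p'.2.2.1 y = Ω'.muY y := by
            show (if y ∈ C then Ω'.muY y else 0) = Ω'.muY y
            rw [if_pos hy]
          have e3 : p'.2.2.2.1 y = Ω'.lam y := by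
            show (if y ∈ C then Ω'.lam y else 0) = Ω'.lam y
            rw [if_pos hy]
          rw [Finset.sum_congr rfl e, e2, e3]
          exact (a3 y hy).2.2.2
    have hPhiEq : Phi d f g I C rp r0 B0 Ω' = Phi d f g I C rp r0 B0 (mkAlloc d p') := by
      refine myPhiCongr d f g I C rp r0 B0 Ω' (mkAlloc d p') ?_ ?_ ?_ ?_ ?_
      · intro z hz; simp [mkAlloc, hp'def, hz]
      · intro y hy z hz
        show Ω'.mu z y = (if z ∈ C.erase y ∧ y ∈ C then Ω'.mu z y else 0)
        rw [if_pos ⟨hz, hy⟩]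
      · intro y hy; simp [mkAlloc, hp'def, hy]
      · intro y hy; simp [mkAlloc, hp'def, hy]
      · intro z hz; simp [mkAlloc, hp'def, hz]
    rw [hPhiEq]
    exact hmax hp'

end Stmt7Aux

/-- **Proposition 2.** There exists a Nash equilibrium
`Ω* = (μ*_infl, Λ*, X*)` of the game with perfect information that maximizes
the social welfare over all admissible allocations:
`Φ(Ω*) = max_{Ω ∈ S(M_infl,M)} Φ(Ω)`.  In particular, every maximizer of `Φ`
over `S(M_infl, M)` is a Nash equilibrium, and such a maximizer exists. -/
theorem stmt7 (d : ℕ) (f g I : ℝ → ℝ)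
    (hf_cont : ContinuousOn f (Set.Ici 0)) (hf_anti : StrictAntiOn f (Set.Ici 0))
    (hf_rng : ∀ t ∈ Set.Ici (0 : ℝ), f t ∈ Set.Ioc (0 : ℝ) 1)
    (hg_cont : ContinuousOn g (Set.Ici 0)) (hg_anti : StrictAntiOn g (Set.Ici 0))
    (hg_rng : ∀ t ∈ Set.Ici (0 : ℝ), g t ∈ Set.Ioc (0 : ℝ) 1)
    (hI_diff : ContDiffOn ℝ 1 I (Set.Ici 0))
    (hI_mono : StrictMonoOn I (Set.Ici 0))
    (hI_conc : StrictConcaveOn ℝ (Set.Ici 0) I)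
    (hI_zero : I 0 = 0)
    (hI_lim : Filter.Tendsto I Filter.atTop (nhds 1))
    (T : Set (E d)) (hT_ne : T.Nonempty) (hT_conv : Convex ℝ T) (hT_comp : IsCompact T)
    (C : Finset (E d)) (hC : ↑C ⊆ T)
    (rp r0 B0 : ℝ) (hrp : 0 < rp) (hr0 : 0 < r0) (hB0 : 0 < B0)
    (Minfl M : ℝ) (hMinfl : 0 < Minfl) (hM : 0 < M) :
    (∃ Ω : Alloc d, NashPerfect d f g I T C rp r0 B0 Minfl M Ω ∧
        ∀ Ω' : Alloc d, Admissible d T C Minfl M Ω' →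
          Phi d f g I C rp r0 B0 Ω' ≤ Phi d f g I C rp r0 B0 Ω) ∧
    (∀ Ω : Alloc d, Admissible d T C Minfl M Ω →
        (∀ Ω' : Alloc d, Admissible d T C Minfl M Ω' →
          Phi d f g I C rp r0 B0 Ω' ≤ Phi d f g I C rp r0 B0 Ω) →
        NashPerfect d f g I T C rp r0 B0 Minfl M Ω) ∧
    (∃ Ω : Alloc d, Admissible d T C Minfl M Ω ∧
        ∀ Ω' : Alloc d, Admissible d T C Minfl M Ω' →
          Phi d f g I C rp r0 B0 Ω' ≤ Phi d f g I C rp r0 B0 Ω) := by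
  have hI_cont : ContinuousOn I (Set.Ici 0) := hI_diff.continuousOn
  obtain ⟨Ω, hAdm, hmax⟩ := myExistsMax d f g I hf_cont hg_cont hI_cont T hT_ne hT_comp C
    rp r0 B0 Minfl M hMinfl hM
  refine ⟨⟨Ω, myMaxNash d f g I T C rp r0 B0 Minfl M Ω hAdm hmax, hmax⟩,
    fun Ω₁ h₁ h₂ => myMaxNash d f g I T C rp r0 B0 Minfl M Ω₁ h₁ h₂,
    ⟨Ω, hAdm, hmax⟩⟩
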